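/- Let μ ∈ (k-1,k) with k ∈ ℕ and let u be a polynomial of degree ≤ N. Then the Caputo fractional derivative ᶜD₋^μ u can be written as (1+x)^{k-μ} φ(x) for some polynomial φ of degree ≤ N-k, and the Riemann–Liouville derivative ᴿD₋^μ u can be written as (1+x)^{-μ} ψ(x) for some polynomial ψ of degree ≤ N. -/

import Mathlib

open Real Filter Set

/-- Left-sided Riemann–Liouville fractional integral of order `ρ` with base point `a`. -/
noncomputable def fracInt (a ρ : ℝ) (u : ℝ → ℝ) (x : ℝ) : ℝ :=
  (1 / Real.Gamma ρ) * ∫ y in a..x, u y * (x - y) ^ (ρ - 1)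

/-- Left-sided Caputo fractional derivative of order `μ ∈ (k-1,k)` with base point `a`. -/
noncomputable def caputoD (k : ℕ) (μ a : ℝ) (u : ℝ → ℝ) : ℝ → ℝ :=
  fracInt a ((k : ℝ) - μ) (iteratedDeriv k u)

/-- Left-sided Riemann–Liouville fractional derivative of order `μ ∈ (k-1,k)` with base point `a`. -/
noncomputable def rlD (k : ℕ) (μ a : ℝ) (u : ℝ → ℝ) : ℝ → ℝ :=
  iteratedDeriv k (fracInt a ((k : ℝ) - μ) u)

/-- Jacobi polynomial `P_n^{(α,β)}` for general real parameters, via the terminating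
hypergeometric representation. -/
noncomputable def jacobiP (n : ℕ) (α β : ℝ) (x : ℝ) : ℝ :=
  (1 / (n.factorial : ℝ)) * ∑ m ∈ Finset.range (n + 1),
    (n.choose m : ℝ) * (∏ i ∈ Finset.range (n - m), (α + m + 1 + i)) *
    (∏ i ∈ Finset.range m, (α + β + n + 1 + i)) * ((x - 1) / 2) ^ m

/-- Legendre polynomial. -/
noncomputable def legendreP (n : ℕ) (x : ℝ) : ℝ := jacobiP n 0 0 x

/-- The integral of a monomial against the fractional kernel, computed by the
substitution `y = (1+x) s - 1`. -/
lemma integral_monomial (ρ : ℝ) (n : ℕ) {x : ℝ} (hx : -1 < x) :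
    (∫ y in (-1:ℝ)..x, (1 + y) ^ n * (x - y) ^ (ρ - 1))
      = (∫ s in (0:ℝ)..1, s ^ n * (1 - s) ^ (ρ - 1)) * ((1 + x) ^ ρ * (1 + x) ^ n) := by
  have h1x : (0:ℝ) < 1 + x := by linarith
  have hc : (1 + x) ≠ 0 := ne_of_gt h1x
  have key := intervalIntegral.integral_comp_mul_add
      (f := fun y => (1 + y) ^ n * (x - y) ^ (ρ - 1)) (a := (0:ℝ)) (b := 1) hc (-1)
  have e0 : (1 + x) * 0 + -1 = (-1 : ℝ) := by ring
  have e1 : (1 + x) * 1 + -1 = x := by ring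
  rw [e0, e1] at key
  have hI : (∫ y in (-1:ℝ)..x, (1 + y) ^ n * (x - y) ^ (ρ - 1))
      = (1 + x) * ∫ s in (0:ℝ)..1,
          (1 + ((1 + x) * s + -1)) ^ n * (x - ((1 + x) * s + -1)) ^ (ρ - 1) := by
    rw [key, smul_eq_mul, ← mul_assoc, mul_inv_cancel₀ hc, one_mul]
  rw [hI]
  have hcongr : (∫ s in (0:ℝ)..1,
        (1 + ((1 + x) * s + -1)) ^ n * (x - ((1 + x) * s + -1)) ^ (ρ - 1))
      = ∫ s in (0:ℝ)..1,
          ((1 + x) ^ n * (1 + x) ^ (ρ - 1)) * (s ^ n * (1 - s) ^ (ρ - 1)) := by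
    apply intervalIntegral.integral_congr
    intro s hs
    dsimp only
    rw [Set.uIcc_of_le (by norm_num : (0:ℝ) ≤ 1)] at hs
    have hs0 : 0 ≤ s := hs.1
    have hs1 : 0 ≤ 1 - s := by linarith [hs.2]
    have ha : 1 + ((1 + x) * s + -1) = (1 + x) * s := by ring
    have hb : x - ((1 + x) * s + -1) = (1 + x) * (1 - s) := by ring
    rw [ha, hb, mul_pow, Real.mul_rpow h1x.le hs1]
    ring
  rw [hcongr, intervalIntegral.integral_const_mul]
  have hsplit : (1 + x) ^ ρ = (1 + x) * (1 + x) ^ (ρ - 1) := by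
    rw [show ρ = 1 + (ρ - 1) by ring, Real.rpow_add h1x, Real.rpow_one]
    ring_nf
  rw [hsplit]; ring

lemma integrable_monomial (n : ℕ) {ρ : ℝ} (x : ℝ) (hρ : 0 < ρ) :
    IntervalIntegrable (fun y => (1 + y) ^ n * (x - y) ^ (ρ - 1)) MeasureTheory.volume (-1) x := by
  have h := (intervalIntegral.intervalIntegrable_rpow'
      (a := x + 1) (b := 0) (by linarith : (-1:ℝ) < ρ - 1)).comp_sub_left x
  have e0 : x - (x + 1) = (-1 : ℝ) := by ring
  have e1 : x - 0 = x := by ring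
  rw [e0, e1] at h
  exact h.continuousOn_mul (((continuous_const.add continuous_id).pow n).continuousOn)

/-- The fractional integral of a polynomial on `(-1,1)` is `(1+x)^ρ` times a polynomial
of no larger degree. -/
lemma fracInt_poly {ρ : ℝ} (hρ : 0 < ρ) (q : Polynomial ℝ) :
    ∃ φ : Polynomial ℝ, φ.natDegree ≤ q.natDegree ∧
      ∀ x ∈ Set.Ioo (-1:ℝ) 1,
        fracInt (-1) ρ (fun y => q.eval y) x = (1 + x) ^ ρ * φ.eval x := by
  classical
  set r := q.comp (Polynomial.X - Polynomial.C 1) with hr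
  have hqr : ∀ y : ℝ, q.eval y = r.eval (1 + y) := by
    intro y
    rw [hr, Polynomial.eval_comp]
    norm_num
  have hdeg : r.natDegree ≤ q.natDegree := by
    refine (Polynomial.natDegree_comp_le).trans ?_
    rw [Polynomial.natDegree_X_sub_C]
    simp
  set M := r.natDegree + 1 with hM
  set φ : Polynomial ℝ := ∑ n ∈ Finset.range M,
      Polynomial.C (r.coeff n *
        ((1 / Real.Gamma ρ) * ∫ s in (0:ℝ)..1, s ^ n * (1 - s) ^ (ρ - 1))) *
      (1 + Polynomial.X) ^ n with hφ
  refine ⟨φ, ?_, ?_⟩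
  · refine Polynomial.natDegree_sum_le_of_forall_le _ _ fun n hn => ?_
    refine (Polynomial.natDegree_mul_le).trans ?_
    rw [Polynomial.natDegree_C, zero_add]
    refine (Polynomial.natDegree_pow_le).trans ?_
    have h1 : (1 + Polynomial.X : Polynomial ℝ).natDegree = 1 := by
      simpa [add_comm] using (Polynomial.natDegree_X_add_C (1 : ℝ))
    rw [h1, mul_one]
    have := Finset.mem_range.mp hn
    omega
  · intro x hx
    have h1x : (0:ℝ) < 1 + x := by linarith [hx.1]
    unfold fracInt
    have hsum : (∫ y in (-1:ℝ)..x, q.eval y * (x - y) ^ (ρ - 1))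
        = ∑ n ∈ Finset.range M,
            r.coeff n * ∫ y in (-1:ℝ)..x, (1 + y) ^ n * (x - y) ^ (ρ - 1) := by
      have step1 : (∫ y in (-1:ℝ)..x, q.eval y * (x - y) ^ (ρ - 1))
          = ∫ y in (-1:ℝ)..x, ∑ n ∈ Finset.range M,
              r.coeff n * ((1 + y) ^ n * (x - y) ^ (ρ - 1)) := by
        apply intervalIntegral.integral_congr
        intro y _
        dsimp only
        rw [hqr y, Polynomial.eval_eq_sum_range, Finset.sum_mul]
        simp [mul_assoc, hM]
      rw [step1, intervalIntegral.integral_finset_sum]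
      · refine Finset.sum_congr rfl fun n _ => ?_
        rw [intervalIntegral.integral_const_mul]
      · intro n _
        exact (integrable_monomial n x hρ).const_mul _
    rw [hsum]
    have hev : φ.eval x = ∑ n ∈ Finset.range M,
        (r.coeff n * ((1 / Real.Gamma ρ) * ∫ s in (0:ℝ)..1, s ^ n * (1 - s) ^ (ρ - 1)))
          * (1 + x) ^ n := by
      rw [hφ]
      simp [Polynomial.eval_finset_sum]
    rw [hev, Finset.mul_sum, Finset.mul_sum]
    refine Finset.sum_congr rfl fun n _ => ?_
    rw [integral_monomial ρ n hx.1]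
    ring

/-- Iterated derivatives of `(1+x)^s * ψ(x)` on `(-1,1)`. -/
lemma iteratedDeriv_rpow_poly (k : ℕ) (s : ℝ) (F : ℝ → ℝ) (ψ : Polynomial ℝ)
    (h : ∀ x ∈ Set.Ioo (-1:ℝ) 1, F x = (1 + x) ^ s * ψ.eval x) :
    ∃ ψ' : Polynomial ℝ, ψ'.natDegree ≤ ψ.natDegree ∧
      ∀ x ∈ Set.Ioo (-1:ℝ) 1,
        iteratedDeriv k F x = (1 + x) ^ (s - k) * ψ'.eval x := by
  induction k with
  | zero =>
    exact ⟨ψ, le_rfl, fun x hx => by simpa using h x hx⟩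
  | succ k ih =>
    obtain ⟨ψ', hd, hEq⟩ := ih
    set t : ℝ := s - k with ht
    set ψ'' : Polynomial ℝ :=
      Polynomial.C t * ψ' + (Polynomial.X + Polynomial.C 1) * ψ'.derivative with hψ''
    have hd2 : ψ''.natDegree ≤ ψ.natDegree := by
      refine le_trans ?_ hd
      refine (Polynomial.natDegree_add_le _ _).trans (max_le ?_ ?_)
      · exact (Polynomial.natDegree_C_mul_le _ _)
      · by_cases h0 : ψ'.natDegree = 0
        · obtain ⟨a, rfl⟩ := Polynomial.natDegree_eq_zero.mp h0
          simp
        · have hlt := Polynomial.natDegree_derivative_lt h0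
          refine (Polynomial.natDegree_mul_le).trans ?_
          rw [Polynomial.natDegree_X_add_C]
          omega
    refine ⟨ψ'', hd2, fun x hx => ?_⟩
    have h1x : (0:ℝ) < 1 + x := by linarith [hx.1]
    have hne : (1:ℝ) + x ≠ 0 := ne_of_gt h1x
    rw [iteratedDeriv_succ]
    have hev : iteratedDeriv k F =ᶠ[nhds x] fun y => (1 + y) ^ t * ψ'.eval y := by
      filter_upwards [Ioo_mem_nhds hx.1 hx.2] with y hy using hEq y hy
    rw [hev.deriv_eq]
    have h0 : HasDerivAt (fun y : ℝ => 1 + y) 1 x := (hasDerivAt_id x).const_add 1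
    have hd1 : HasDerivAt (fun y : ℝ => (1 + y) ^ t) (t * (1 + x) ^ (t - 1) * 1) x :=
      (Real.hasDerivAt_rpow_const (x := 1 + x) (p := t) (Or.inl hne)).comp x h0
    have hdp : HasDerivAt (fun y : ℝ => ψ'.eval y) (ψ'.derivative.eval x) x :=
      ψ'.hasDerivAt x
    rw [HasDerivAt.deriv (f := fun y => (1 + y) ^ t * ψ'.eval y) (hd1.mul hdp)]
    have hexp : t - 1 = s - (k + 1 : ℕ) := by push_cast [ht]; ring
    have hsplit : (1 + x) ^ t = (1 + x) ^ (s - (k + 1 : ℕ)) * (1 + x) := by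
      rw [show t = (s - ((k + 1 : ℕ) : ℝ)) + 1 by push_cast [ht]; ring,
        Real.rpow_add h1x, Real.rpow_one]
    rw [hexp, hsplit, hψ'']
    simp only [Polynomial.eval_add, Polynomial.eval_mul, Polynomial.eval_C,
      Polynomial.eval_X, Polynomial.eval_one]
    ring

lemma iteratedDeriv_polynomial (k : ℕ) (p : Polynomial ℝ) :
    iteratedDeriv k (fun y => p.eval y) = fun y => (Polynomial.derivative^[k] p).eval y := by
  induction k generalizing p with
  | zero => simp [iteratedDeriv_zero]
  | succ k ih =>
    rw [iteratedDeriv_succ']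
    have hder : deriv (fun y : ℝ => p.eval y) = fun y => p.derivative.eval y :=
      funext fun y => p.deriv
    rw [hder, ih, Function.iterate_succ_apply]

theorem stmt10 (k N : ℕ) (μ : ℝ) (hμ : (k : ℝ) - 1 < μ ∧ μ < k)
    (p : Polynomial ℝ) (hp : p.natDegree ≤ N) :
    (∃ φ : Polynomial ℝ, φ.natDegree ≤ N - k ∧
        ∀ x ∈ Set.Ioo (-1 : ℝ) 1,
          caputoD k μ (-1) (fun y => p.eval y) x = (1 + x) ^ ((k : ℝ) - μ) * φ.eval x) ∧
    (∃ ψ : Polynomial ℝ, ψ.natDegree ≤ N ∧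
        ∀ x ∈ Set.Ioo (-1 : ℝ) 1,
          rlD k μ (-1) (fun y => p.eval y) x = (1 + x) ^ (-μ) * ψ.eval x) := by
  have hρ : 0 < (k : ℝ) - μ := by linarith [hμ.2]
  constructor
  · obtain ⟨φ, hφd, hφ⟩ := fracInt_poly hρ (Polynomial.derivative^[k] p)
    refine ⟨φ, ?_, ?_⟩
    · exact hφd.trans ((Polynomial.natDegree_iterate_derivative p k).trans
        (Nat.sub_le_sub_right hp k))
    · intro x hx
      have hc : caputoD k μ (-1) (fun y => p.eval y)
          = fracInt (-1) ((k : ℝ) - μ) (fun y => (Polynomial.derivative^[k] p).eval y) := by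
        unfold caputoD
        rw [iteratedDeriv_polynomial]
      rw [hc]
      exact hφ x hx
  · obtain ⟨ψ₀, hd0, h0⟩ := fracInt_poly hρ p
    obtain ⟨ψ, hd, hψ⟩ := iteratedDeriv_rpow_poly k ((k : ℝ) - μ)
      (fracInt (-1) ((k : ℝ) - μ) (fun y => p.eval y)) ψ₀ h0
    refine ⟨ψ, hd.trans (hd0.trans hp), fun x hx => ?_⟩
    have := hψ x hx
    rw [show (k : ℝ) - μ - k = -μ by ring] at this
    exact this
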